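/- Let g(x) with g(0)=1 satisfy g(x) = 1 + x·g(x)·B(x²·g(x)) for a formal power series B(x) = Σ b_i xⁱ. Writing g_n^{(m)} = [xⁿ] g(x)^m, one has for all n ≥ 1 and m ≥ 1: g_n^{(m)} = b_0·Σ_{i=1}^{m} g_{n-1}^{(i)} + b_1·Σ_{i=2}^{m+1} g_{n-3}^{(i)} + b_2·Σ_{i=3}^{m+2} g_{n-5}^{(i)} + ... + b_p·Σ_{i=p+1}^{m+p} g_{n-1-2p}^{(i)}, where p = ⌊(n-1)/2⌋. -/

import Mathlib

open PowerSeries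

/-- Substitution of the power series `g` (with zero constant term) into `f`. -/
noncomputable def pscomp (f g : PowerSeries ℚ) : PowerSeries ℚ :=
  PowerSeries.mk fun N => ∑ n ∈ Finset.range (N + 1), coeff n f * coeff N (g ^ n)

lemma icc_shift (k m : ℕ) (f : ℕ → ℚ) :
    ∑ i ∈ Finset.Icc (k + 1) (m + k), f i = ∑ i ∈ Finset.range m, f (i + 1 + k) := by
  induction m with
  | zero => simp
  | succ m ih =>
    have h : m + 1 + k = (m + k) + 1 := by omega
    rw [h, Finset.sum_Icc_succ_top (by omega), ih, Finset.sum_range_succ]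
    rw [show m + k + 1 = m + 1 + k from by omega]

theorem stmt_9 (B g : PowerSeries ℚ) (hg0 : constantCoeff g = 1)
    (hg : g = 1 + X * g * pscomp B (X ^ 2 * g)) :
    ∀ n m : ℕ, 1 ≤ n → 1 ≤ m →
      coeff n (g ^ m) =
        ∑ j ∈ Finset.range ((n - 1) / 2 + 1),
          coeff j B * ∑ i ∈ Finset.Icc (j + 1) (m + j), coeff (n - 1 - 2 * j) (g ^ i) := by
  set A := pscomp B (X ^ 2 * g) with hA
  -- coefficient of X^d * f
  have hXpow : ∀ (d j : ℕ) (f : PowerSeries ℚ),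
      coeff j (X ^ d * f) = if d ≤ j then coeff (j - d) f else 0 := by
    intro d j f
    rw [mul_comm, PowerSeries.coeff_mul_X_pow']
  -- expansion of g^m
  have L1 : ∀ m : ℕ, g ^ m = 1 + ∑ i ∈ Finset.range m, X * g ^ (i + 1) * A := by
    intro m
    induction m with
    | zero => simp
    | succ m ih =>
      calc g ^ (m + 1) = g ^ m * g := by rw [pow_succ]
        _ = g ^ m * (1 + X * g * A) := by rw [← hg]
        _ = g ^ m + X * g ^ (m + 1) * A := by ring
        _ = 1 + ∑ i ∈ Finset.range (m + 1), X * g ^ (i + 1) * A := by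
            rw [ih, Finset.sum_range_succ]; ring
  have coeffA : ∀ j : ℕ, coeff j A =
      ∑ k ∈ Finset.range (j + 1), coeff k B * coeff j (X ^ (2 * k) * g ^ k) := by
    intro j
    have : ∀ k : ℕ, (X ^ 2 * g : PowerSeries ℚ) ^ k = X ^ (2 * k) * g ^ k := by
      intro k; rw [mul_pow, ← pow_mul]
    simp only [hA, pscomp, coeff_mk, this]
  -- key coefficient formula
  have L2 : ∀ (N i : ℕ), coeff N (g ^ i * A) =
      ∑ k ∈ Finset.range (N / 2 + 1), coeff k B * coeff (N - 2 * k) (g ^ (i + k)) := by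
    intro N i
    set S : PowerSeries ℚ := ∑ k ∈ Finset.range (N + 1),
        (coeff k B) • (X ^ (2 * k) * g ^ k) with hS
    have hcoeffS : ∀ j : ℕ, j ≤ N → coeff j A = coeff j S := by
      intro j hj
      rw [coeffA, hS, map_sum]
      simp only [map_smul, smul_eq_mul]
      apply Finset.sum_subset
      · exact Finset.range_subset_range.2 (by omega)
      · intro k hk hk2
        simp only [Finset.mem_range] at hk hk2
        rw [hXpow, if_neg (by omega), mul_zero]
    have h1 : coeff N (g ^ i * A) = coeff N (g ^ i * S) := by
      rw [coeff_mul, coeff_mul]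
      apply Finset.sum_congr rfl
      intro p hp
      have := Finset.HasAntidiagonal.mem_antidiagonal.mp hp
      rw [hcoeffS p.2 (by omega)]
    rw [h1, hS, Finset.mul_sum, map_sum]
    have h2 : ∀ k : ℕ, coeff N (g ^ i * ((coeff k B) • (X ^ (2 * k) * g ^ k))) =
        coeff k B * coeff N (X ^ (2 * k) * g ^ (i + k)) := by
      intro k
      rw [mul_smul_comm, map_smul, smul_eq_mul]
      congr 2
      rw [pow_add]; ring
    simp only [h2]
    rw [← Finset.sum_subset (Finset.range_subset_range.2 (show N / 2 + 1 ≤ N + 1 by omega))]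
    · apply Finset.sum_congr rfl
      intro k hk
      simp only [Finset.mem_range] at hk
      rw [hXpow, if_pos (by omega)]
    · intro k hk hk2
      simp only [Finset.mem_range] at hk hk2
      rw [hXpow, if_neg (by omega), mul_zero]
  intro n m hn hm
  obtain ⟨N, rfl⟩ : ∃ N, n = N + 1 := ⟨n - 1, by omega⟩
  rw [L1 m]
  rw [map_add, map_sum]
  have h0 : coeff (N + 1) (1 : PowerSeries ℚ) = 0 := by
    rw [coeff_one, if_neg (by omega)]
  have hX : ∀ i : ℕ, coeff (N + 1) (X * g ^ (i + 1) * A) = coeff N (g ^ (i + 1) * A) := by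
    intro i
    rw [mul_assoc, PowerSeries.coeff_succ_X_mul]
  simp only [h0, hX, zero_add, L2]
  rw [Finset.sum_comm]
  have hNs : N + 1 - 1 = N := by omega
  simp only [hNs]
  apply Finset.sum_congr rfl
  intro k hk
  rw [← Finset.mul_sum, icc_shift k m (fun j => coeff (N - 2 * k) (g ^ j))]
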